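/- If n and k are both even and k divides n, then the cycle of length 2k divides Q_n. -/

import Mathlib

open SimpleGraph

/-- `H` divides `G`: the edge set of `G` can be partitioned into edge sets of
subgraphs of `G`, each isomorphic to `H`. -/
def GraphDivides {α β : Type} (H : SimpleGraph α) (G : SimpleGraph β) : Prop :=
  ∃ (ι : Type) (f : ι → G.Subgraph),
    (∀ i, Nonempty (H ≃g (f i).coe)) ∧
    ∀ e ∈ G.edgeSet, ∃! i, e ∈ (f i).edgeSet

/-- The `n`-dimensional hypercube graph. -/
def cube (n : ℕ) : SimpleGraph (Fin n → ZMod 2) where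
  Adj x y := hammingDist x y = 1
  symm := ⟨fun (x y : Fin n → ZMod 2) h => by
    have h' : hammingDist x y = 1 := h
    show hammingDist y x = 1
    rwa [hammingDist_comm]⟩
  loopless := ⟨fun (x : Fin n → ZMod 2) h => by
    have h' : hammingDist x x = 1 := h
    simp [hammingDist_self] at h'⟩

namespace CubeCycleDecomp

/-! ### ZMod 2 helpers -/

lemma zadd (a : ZMod 2) : a + a = 0 := by revert a; decide

lemma zcancel (a b : ZMod 2) : a + b = 0 → b = a := by revert a b; decide

lemma zne (a b : ZMod 2) : a ≠ b → b = a + 1 := by revert a b; decide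

lemma zcases (a : ZMod 2) : a = 0 ∨ a = 1 := by revert a; decide

lemma zne_add (a d : ZMod 2) : (a ≠ a + d) ↔ d ≠ 0 := by revert a d; decide

/-! ### cyclic successor on `Fin m` -/

def nxt {m : ℕ} (t : Fin m) : Fin m := ⟨(t.val + 1) % m, Nat.mod_lt _ t.pos⟩

lemma nxt_val {m : ℕ} (t : Fin m) :
    (nxt t).val = if t.val + 1 = m then 0 else t.val + 1 := by
  have ht := t.isLt
  rcases Nat.lt_or_ge (t.val + 1) m with h | h
  · rw [if_neg (by omega)]
    exact Nat.mod_eq_of_lt h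
  · have h2 : t.val + 1 = m := by omega
    rw [if_pos h2]
    show (t.val + 1) % m = 0
    rw [h2, Nat.mod_self]

lemma fin_sub_val {m : ℕ} (t s : Fin m) :
    (s - t).val = if t.val ≤ s.val then s.val - t.val else m + s.val - t.val := by
  have ht := t.isLt; have hs := s.isLt
  rw [Fin.sub_def]
  split_ifs with h
  · have e : m - t.val + s.val = (s.val - t.val) + m := by omega
    show (m - t.val + s.val) % m = s.val - t.val
    rw [e, Nat.add_mod_right, Nat.mod_eq_of_lt (by omega)]
  · have e : m - t.val + s.val = m + s.val - t.val := by omega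
    show (m - t.val + s.val) % m = m + s.val - t.val
    rw [e]
    exact Nat.mod_eq_of_lt (by omega)

lemma eq_nxt_iff {m : ℕ} (hm : 2 ≤ m) (t s : Fin m) : (s - t).val = 1 ↔ s = nxt t := by
  rw [fin_sub_val, Fin.ext_iff, nxt_val]
  have ht := t.isLt; have hs := s.isLt
  split_ifs <;> omega

/-! ### the cycle vertices -/

def eind (k a t j : ℕ) : ZMod 2 :=
  if a ≤ j ∧ j < a + k ∧ j - a < t ∧ t ≤ j - a + k then 1 else 0

def cvert {n : ℕ} (k a : ℕ) (x : Fin n → ZMod 2) (t : ℕ) : Fin n → ZMod 2 :=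
  fun j => x j + eind k a t j.val

lemma mod_facts (k t : ℕ) (hk : 0 < k) (ht : t < 2 * k) :
    t % k < k ∧ (t % k = t ∨ t % k + k = t) := by
  refine ⟨Nat.mod_lt _ hk, ?_⟩
  rcases Nat.lt_or_ge t k with h | h
  · exact Or.inl (Nat.mod_eq_of_lt h)
  · right
    have h2 : t % k = (t - k) % k := Nat.mod_eq_sub_mod h
    rw [h2, Nat.mod_eq_of_lt (by omega)]
    omega

lemma eind_step (k a t : ℕ) (hk : 0 < k) (ht : t < 2 * k) (j : ℕ) :
    eind k a (t + 1) j = eind k a t j + (if j = a + t % k then 1 else 0) := by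
  obtain ⟨h1, h2⟩ := mod_facts k t hk ht
  generalize hr : t % k = r at h1 h2 ⊢
  unfold eind
  split_ifs <;> first | decide | (exfalso; omega)

lemma eind_flip (k a : ℕ) {i₀ : ℕ} (hi : i₀ < k) (j : ℕ) :
    eind k a (k + i₀) j = eind k a i₀ j + (if a ≤ j ∧ j < a + k then 1 else 0) := by
  unfold eind
  split_ifs <;> first | decide | (exfalso; omega)

lemma cvert_step {n : ℕ} (k a t : ℕ) (hk : 0 < k) (ht : t < 2 * k)
    (x : Fin n → ZMod 2) (l : Fin n) :
    cvert k a x (t + 1) l = cvert k a x t l + (if l.val = a + t % k then 1 else 0) := by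
  show x l + eind k a (t + 1) l.val = x l + eind k a t l.val + _
  rw [eind_step k a t hk ht, add_assoc]

lemma cvert_invol {n : ℕ} (k a t : ℕ) (x : Fin n → ZMod 2) :
    cvert k a (cvert k a x t) t = x := by
  funext l
  show (x l + eind k a t l.val) + eind k a t l.val = x l
  rw [add_assoc, zadd, add_zero]

lemma cvert_nxt {n : ℕ} (k a : ℕ) (x : Fin n → ZMod 2) (t : Fin (2 * k)) :
    cvert k a x ((nxt t).val) = cvert k a x (t.val + 1) := by
  rw [nxt_val]
  split_ifs with h
  · funext l
    show x l + eind k a 0 l.val = x l + eind k a (t.val + 1) l.val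
    unfold eind
    rw [if_neg (by omega), if_neg (by omega)]
  · rfl

lemma cvert_ne_iff {n : ℕ} (k a t : ℕ) (hk : 0 < k) (ht : t < 2 * k)
    (x : Fin n → ZMod 2) (l : Fin n) :
    (cvert k a x t l ≠ cvert k a x (t + 1) l) ↔ l.val = a + t % k := by
  rw [cvert_step k a t hk ht, zne_add]
  split_ifs with h
  · exact iff_of_true (by decide) h
  · exact iff_of_false (by simp) h

lemma cvert_hamming {n k a : ℕ} {t : ℕ} (hk : 0 < k) (ha : a + k ≤ n) (ht : t < 2 * k)
    (x : Fin n → ZMod 2) :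
    hammingDist (cvert k a x t) (cvert k a x (t + 1)) = 1 := by
  have hr : t % k < k := (mod_facts k t hk ht).1
  have hcoord : a + t % k < n := by omega
  rw [hammingDist]
  convert Finset.card_singleton (⟨a + t % k, hcoord⟩ : Fin n)
  ext l
  simp only [Finset.mem_filter, Finset.mem_univ, true_and, Finset.mem_singleton]
  rw [cvert_ne_iff k a t hk ht]
  exact ⟨fun h => Fin.ext h, fun h => congrArg Fin.val h⟩

lemma cvert_inj {n k a : ℕ} (hk : 0 < k) (ha : a + k ≤ n) (x : Fin n → ZMod 2) {t s : ℕ}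
    (ht : t < 2 * k) (hs : s < 2 * k) (h : cvert k a x t = cvert k a x s) : t = s := by
  have key : ∀ i, i < k → ((i < t ∧ t ≤ i + k) ↔ (i < s ∧ s ≤ i + k)) := by
    intro i hi
    have h2 := congrFun h (⟨a + i, by omega⟩ : Fin n)
    have h3 : eind k a t (a + i) = eind k a s (a + i) := add_left_cancel h2
    rw [eind, eind] at h3
    split_ifs at h3 with hA hB
    · constructor <;> intro _ <;> omega
    · exact absurd h3 (by decide)
    · exact absurd h3 (by decide)
    · constructor <;> intro hc <;> exfalso <;> omega
  rcases Nat.lt_or_ge t k with h1 | h1 <;> rcases Nat.lt_or_ge s k with h2 | h2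
  · have k1 := key t h1; have k2 := key s h2; omega
  · have k1 := key t h1; have k2 := key (s - k) (by omega); omega
  · have k1 := key (t - k) (by omega); have k2 := key s h2; omega
  · have k1 := key (t - k) (by omega); have k2 := key (s - k) (by omega); omega

/-! ### block sums -/

def bsum {n : ℕ} (k a : ℕ) (x : Fin n → ZMod 2) : ZMod 2 :=
  ∑ j : Fin n, if a ≤ j.val ∧ j.val < a + k then x j else 0

lemma card_block {n k a : ℕ} (ha : a + k ≤ n) :
    (Finset.univ.filter (fun j : Fin n => a ≤ j.val ∧ j.val < a + k)).card = k := by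
  apply Finset.card_eq_of_bijective (fun i hi => (⟨a + i, by omega⟩ : Fin n))
  · intro l hl
    simp only [Finset.mem_filter, Finset.mem_univ, true_and] at hl
    exact ⟨l.val - a, by omega, Fin.ext (show a + (l.val - a) = l.val by omega)⟩
  · intro i hi
    simp only [Finset.mem_filter, Finset.mem_univ, true_and]
    omega
  · intro i j hi hj hij
    have h2 : a + i = a + j := congrArg Fin.val hij
    omega

def Ffam {n : ℕ} (k a : ℕ) (j : Fin n) (y : Fin n → ZMod 2) (ε δ : ZMod 2) :
    Fin n → ZMod 2 :=
  fun l => y l + ε * (if l = j then 1 else 0) + δ * (if a ≤ l.val ∧ l.val < a + k then 1 else 0)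

lemma bsum_Ffam {n k a : ℕ} (hkE : 2 ∣ k) (ha : a + k ≤ n) {j : Fin n}
    (hj : a ≤ j.val ∧ j.val < a + k) (y : Fin n → ZMod 2) (ε δ : ZMod 2) :
    bsum k a (Ffam k a j y ε δ) = bsum k a y + ε := by
  unfold bsum Ffam
  have h1 : ∀ l : Fin n,
      (if a ≤ l.val ∧ l.val < a + k then
        (y l + ε * (if l = j then 1 else 0) +
          δ * (if a ≤ l.val ∧ l.val < a + k then 1 else 0)) else 0)
      = (if a ≤ l.val ∧ l.val < a + k then y l else 0) + (if l = j then ε else 0)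
          + (if a ≤ l.val ∧ l.val < a + k then δ else 0) := by
    intro l
    by_cases hc : a ≤ l.val ∧ l.val < a + k
    · by_cases hlj : l = j
      · subst hlj; simp [hc]
      · simp [hc, hlj]
    · have hlj : l ≠ j := by rintro rfl; exact hc hj
      simp [hc, hlj]
  rw [Finset.sum_congr rfl (fun l _ => h1 l), Finset.sum_add_distrib, Finset.sum_add_distrib]
  have h2 : (∑ l : Fin n, if l = j then ε else 0) = ε := by
    rw [Finset.sum_ite_eq' Finset.univ j (fun _ => ε)]
    simp
  have h3 : (∑ l : Fin n, if a ≤ l.val ∧ l.val < a + k then δ else 0) = 0 := by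
    rw [Finset.sum_ite, Finset.sum_const, Finset.sum_const_zero, add_zero, card_block ha,
      nsmul_eq_mul, (ZMod.natCast_eq_zero_iff k 2).mpr hkE, zero_mul]
  rw [h2, h3, add_zero]

/-! ### the four candidates -/

lemma cand00 {n k a : ℕ} (j : Fin n) (y : Fin n → ZMod 2) : Ffam k a j y 0 0 = y := by
  funext l
  simp [Ffam]

lemma cand_u_hi {n k a : ℕ} {i₀ : ℕ} (hi : i₀ < k) (j : Fin n) (u : Fin n → ZMod 2) :
    cvert k a u (k + i₀) = Ffam k a j (cvert k a u i₀) 0 1 := by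
  funext l
  simp only [Ffam, cvert]
  rw [eind_flip k a hi]
  ring

lemma cand_w_lo {n k a : ℕ} (i₀ : ℕ) {j : Fin n} {u w : Fin n → ZMod 2}
    (hwu : ∀ l, w l = u l + (if l = j then 1 else 0)) :
    cvert k a w i₀ = Ffam k a j (cvert k a u i₀) 1 0 := by
  funext l
  simp only [Ffam, cvert]
  rw [hwu l]
  ring

lemma cand_w_hi {n k a : ℕ} {i₀ : ℕ} (hi : i₀ < k) {j : Fin n} {u w : Fin n → ZMod 2}
    (hwu : ∀ l, w l = u l + (if l = j then 1 else 0)) :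
    cvert k a w (k + i₀) = Ffam k a j (cvert k a u i₀) 1 1 := by
  funext l
  simp only [Ffam, cvert]
  rw [eind_flip k a hi, hwu l]
  ring

lemma block_unique {k a a' i r : ℕ} (ha : k ∣ a) (ha' : k ∣ a') (hi : i < k) (hr : r < k)
    (h : a + i = a' + r) : a = a' ∧ i = r := by
  obtain ⟨s, rfl⟩ := ha
  obtain ⟨s', rfl⟩ := ha'
  have h1 : (k * s + i) % k = i % k := Nat.mul_add_mod k s i
  have h2 : (k * s' + r) % k = r % k := Nat.mul_add_mod k s' r
  rw [Nat.mod_eq_of_lt hi] at h1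
  rw [Nat.mod_eq_of_lt hr] at h2
  rw [h] at h1
  have hir : i = r := h1.symm.trans h2
  exact ⟨by omega, hir⟩

/-! ### the cycle subgraph -/

def cycSub {n : ℕ} (k a : ℕ) (hk : 0 < k) (ha : a + k ≤ n) (x : Fin n → ZMod 2) :
    (cube n).Subgraph where
  verts := Set.range (fun t : Fin (2 * k) => cvert k a x t.val)
  Adj u w := ∃ t : Fin (2 * k),
      (u = cvert k a x t.val ∧ w = cvert k a x ((nxt t).val)) ∨
      (w = cvert k a x t.val ∧ u = cvert k a x ((nxt t).val))
  adj_sub := by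
    rintro u w ⟨t, ⟨rfl, rfl⟩ | ⟨rfl, rfl⟩⟩
    · show hammingDist _ _ = 1
      rw [cvert_nxt]
      exact cvert_hamming hk ha t.isLt x
    · apply (cube n).adj_symm
      show hammingDist _ _ = 1
      rw [cvert_nxt]
      exact cvert_hamming hk ha t.isLt x
  edge_vert := by
    rintro u w ⟨t, ⟨rfl, _⟩ | ⟨_, rfl⟩⟩
    · exact ⟨t, rfl⟩
    · exact ⟨nxt t, rfl⟩
  symm := by
    constructor
    rintro u w ⟨t, h | h⟩
    · exact ⟨t, Or.inr h⟩
    · exact ⟨t, Or.inl h⟩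

lemma cvert_fin_inj {n k a : ℕ} (hk : 0 < k) (ha : a + k ≤ n) (x : Fin n → ZMod 2) :
    Function.Injective (fun t : Fin (2 * k) => cvert k a x t.val) :=
  fun t s h => Fin.ext (cvert_inj hk ha x t.isLt s.isLt h)

lemma cycSub_iso {n k a : ℕ} (hk : 0 < k) (ha : a + k ≤ n) (x : Fin n → ZMod 2) :
    Nonempty (cycleGraph (2 * k) ≃g (cycSub k a hk ha x).coe) := by
  have hinj := cvert_fin_inj hk ha x
  refine ⟨⟨Equiv.ofBijective (fun t => ⟨cvert k a x t.val, ⟨t, rfl⟩⟩) ⟨?_, ?_⟩, ?_⟩⟩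
  · intro t s hts
    exact hinj (congrArg Subtype.val hts)
  · rintro ⟨u, t, rfl⟩
    exact ⟨t, rfl⟩
  · intro t s
    show (cycSub k a hk ha x).Adj (cvert k a x t.val) (cvert k a x s.val) ↔
      (cycleGraph (2 * k)).Adj t s
    rw [cycleGraph_adj']
    constructor
    · rintro ⟨r, ⟨h1, h2⟩ | ⟨h1, h2⟩⟩
      · have e1 : t = r := hinj h1
        have e2 : s = nxt r := hinj h2
        right
        rw [e1, e2]
        exact (eq_nxt_iff (by omega) r (nxt r)).mpr rfl
      · have e1 : s = r := hinj h1
        have e2 : t = nxt r := hinj h2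
        left
        rw [e1, e2]
        exact (eq_nxt_iff (by omega) r (nxt r)).mpr rfl
    · intro h
      rcases h with h | h
      · have ht : t = nxt s := (eq_nxt_iff (by omega) s t).mp h
        exact ⟨s, Or.inr ⟨rfl, by rw [ht]⟩⟩
      · have hs : s = nxt t := (eq_nxt_iff (by omega) t s).mp h
        exact ⟨t, Or.inl ⟨rfl, by rw [hs]⟩⟩

lemma adj_of_cand {n k a : ℕ} (hk : 0 < k) (ha : a + k ≤ n) {u w : Fin n → ZMod 2} {j : Fin n}
    (hj : u j ≠ w j) (hj' : ∀ l, l ≠ j → u l = w l) {t : ℕ} (ht : t < 2 * k)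
    (hjt : j.val = a + t % k) :
    (cycSub k a hk ha (cvert k a u t)).Adj u w := by
  refine ⟨⟨t, ht⟩, Or.inl ⟨(cvert_invol k a t u).symm, ?_⟩⟩
  rw [cvert_nxt]
  show w = cvert k a (cvert k a u t) (t + 1)
  funext l
  rw [cvert_step k a t hk ht, cvert_invol k a t u]
  by_cases hl : l = j
  · rw [if_pos (by rw [hl, hjt]), hl]
    exact zne _ _ hj
  · rw [if_neg (fun hc => hl (Fin.ext (by rw [hc, ← hjt]))), add_zero]
    exact (hj' l hl).symm

lemma cube_adj_exists {n : ℕ} {u w : Fin n → ZMod 2} (h : (cube n).Adj u w) :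
    ∃ j : Fin n, u j ≠ w j ∧ ∀ l, l ≠ j → u l = w l := by
  have h' : ({i | u i ≠ w i} : Finset (Fin n)).card = 1 := h
  obtain ⟨j, hj⟩ := Finset.card_eq_one.mp h'
  refine ⟨j, ?_, ?_⟩
  · have hm : j ∈ ({i | u i ≠ w i} : Finset (Fin n)) := by
      rw [hj]; exact Finset.mem_singleton_self j
    simpa using hm
  · intro l hl
    by_contra hne
    have hm : l ∈ ({i | u i ≠ w i} : Finset (Fin n)) := by simpa using hne
    rw [hj, Finset.mem_singleton] at hm
    exact hl hm

end CubeCycleDecomp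

open CubeCycleDecomp in
theorem cycle_two_k_divides_cube (n k : ℕ) (hn : Even n) (hk : Even k) (hdvd : k ∣ n) :
    GraphDivides (cycleGraph (2 * k)) (cube n) := by
  rcases Nat.eq_zero_or_pos k with rfl | hkpos
  · have hn0 : n = 0 := Nat.eq_zero_of_zero_dvd hdvd
    subst hn0
    refine ⟨Empty, fun i => i.elim, fun i => i.elim, ?_⟩
    intro e
    refine Sym2.ind (fun u w he => ?_) e
    exfalso
    rw [SimpleGraph.mem_edgeSet] at he
    have huw : u = w := funext fun j => j.elim0
    rw [huw] at he
    exact (cube 0).loopless.irrefl w he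
  · have hk2 : 2 ∣ k := hk.two_dvd
    classical
    refine ⟨{p : ℕ × (Fin n → ZMod 2) //
        k ∣ p.1 ∧ p.1 + k ≤ n ∧ bsum k p.1 p.2 = 0 ∧ ∀ l : Fin n, l.val = p.1 → p.2 l = 0},
      fun p => cycSub k p.val.1 hkpos p.property.2.1 p.val.2,
      fun p => cycSub_iso hkpos p.property.2.1 p.val.2, ?_⟩
    intro e
    refine Sym2.ind (fun u w he => ?_) e
    rw [SimpleGraph.mem_edgeSet] at he
    obtain ⟨j, hj, hj'⟩ := cube_adj_exists he
    have hwu : ∀ l, w l = u l + (if l = j then 1 else 0) := by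
      intro l
      by_cases hl : l = j
      · subst hl
        rw [if_pos rfl]
        exact zne _ _ hj
      · rw [if_neg hl, add_zero]
        exact (hj' l hl).symm
    obtain ⟨i₀, a, hi₀, hadvd, haj, han⟩ :
        ∃ i₀ a, i₀ < k ∧ k ∣ a ∧ a + i₀ = j.val ∧ a + k ≤ n := by
      refine ⟨j.val % k, k * (j.val / k), Nat.mod_lt _ hkpos, ⟨_, rfl⟩,
        Nat.div_add_mod j.val k, ?_⟩
      have h1 : j.val / k < n / k := Nat.div_lt_div_of_lt_of_dvd hdvd j.isLt
      calc k * (j.val / k) + k = k * (j.val / k + 1) := by ring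
        _ ≤ k * (n / k) := Nat.mul_le_mul_left k (by omega)
        _ = n := Nat.mul_div_cancel' hdvd
    have hjblk : a ≤ j.val ∧ j.val < a + k := by omega
    obtain ⟨abk, habk⟩ : ∃ l : Fin n, l.val = a := ⟨⟨a, by omega⟩, rfl⟩
    set x1 := cvert k a u i₀ with hx1
    set σ := bsum k a x1 with hσdef
    set δ₀ := x1 abk + σ * (if abk = j then 1 else 0) with hδdef
    set x₀ := Ffam k a j x1 σ δ₀ with hx₀
    have hsum0 : bsum k a x₀ = 0 := by
      rw [hx₀, bsum_Ffam hk2 han hjblk, ← hσdef]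
      exact zadd σ
    have hzero0 : ∀ l : Fin n, l.val = a → x₀ l = 0 := by
      intro l hl
      have hlabk : l = abk := Fin.ext (by omega)
      rw [hlabk, hx₀]
      show x1 abk + σ * (if abk = j then 1 else 0) +
        δ₀ * (if a ≤ abk.val ∧ abk.val < a + k then 1 else 0) = 0
      rw [if_pos (show a ≤ abk.val ∧ abk.val < a + k by omega), mul_one, hδdef]
      exact zadd _
    have hjt1 : j.val = a + i₀ % k := by
      rw [Nat.mod_eq_of_lt hi₀]; omega
    have hjt2 : j.val = a + (k + i₀) % k := by
      rw [Nat.add_mod_left, Nat.mod_eq_of_lt hi₀]; omega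
    have hadj : (cycSub k a hkpos han x₀).Adj u w := by
      rcases zcases σ with hσ | hσ <;> rcases zcases δ₀ with hδ | hδ
      · have hx : x₀ = cvert k a u i₀ := by rw [hx₀, hσ, hδ, cand00, hx1]
        rw [hx]
        exact adj_of_cand hkpos han hj hj' (by omega) hjt1
      · have hx : x₀ = cvert k a u (k + i₀) := by
          rw [hx₀, hσ, hδ, hx1]
          exact (cand_u_hi hi₀ j u).symm
        rw [hx]
        exact adj_of_cand hkpos han hj hj' (by omega) hjt2
      · have hx : x₀ = cvert k a w i₀ := by
          rw [hx₀, hσ, hδ, hx1]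
          exact (cand_w_lo i₀ hwu).symm
        rw [hx]
        exact (cycSub k a hkpos han _).adj_symm
          (adj_of_cand hkpos han hj.symm (fun l hl => (hj' l hl).symm) (by omega) hjt1)
      · have hx : x₀ = cvert k a w (k + i₀) := by
          rw [hx₀, hσ, hδ, hx1]
          exact (cand_w_hi hi₀ hwu).symm
        rw [hx]
        exact (cycSub k a hkpos han _).adj_symm
          (adj_of_cand hkpos han hj.symm (fun l hl => (hj' l hl).symm) (by omega) hjt2)
    refine ⟨⟨(a, x₀), hadvd, han, hsum0, hzero0⟩, Subgraph.mem_edgeSet.mpr hadj, ?_⟩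
    rintro ⟨⟨a', x'⟩, hdvd', han', hsum', hzero'⟩ hmem
    rw [Subgraph.mem_edgeSet] at hmem
    obtain ⟨t, hcase⟩ := hmem
    have main : ∀ (y z : Fin n → ZMod 2), y j ≠ z j →
        y = cvert k a' x' t.val → z = cvert k a' x' ((nxt t).val) →
        j.val = a' + t.val % k ∧ x' = cvert k a' y t.val := by
      intro y z hyz h1 h2
      rw [cvert_nxt] at h2
      constructor
      · apply (cvert_ne_iff k a' t.val hkpos t.isLt x' j).mp
        rw [← h1, ← h2]
        exact hyz
      · rw [h1, cvert_invol]
    have hkey : j.val = a' + t.val % k ∧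
        (x' = cvert k a' u t.val ∨ x' = cvert k a' w t.val) := by
      rcases hcase with ⟨h1, h2⟩ | ⟨h1, h2⟩
      · obtain ⟨hA, hB⟩ := main u w hj h1 h2
        exact ⟨hA, Or.inl hB⟩
      · obtain ⟨hA, hB⟩ := main w u hj.symm h1 h2
        exact ⟨hA, Or.inr hB⟩
    obtain ⟨hjv, hx'⟩ := hkey
    have hmf := mod_facts k t.val hkpos t.isLt
    obtain ⟨haa, hii⟩ := block_unique hadvd hdvd' hi₀ hmf.1 (by omega : a + i₀ = a' + t.val % k)
    subst haa
    have htv : t.val = i₀ ∨ t.val = k + i₀ := by omega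
    have pin : ∀ εx δx : ZMod 2, x' = Ffam k a j x1 εx δx → x' = x₀ := by
      intro εx δx hE
      rw [hE] at hsum'
      rw [bsum_Ffam hk2 han hjblk] at hsum'
      have hε : εx = σ := by
        rw [hσdef]
        exact zcancel _ _ hsum'
      have h0 := hzero' abk habk
      rw [hE] at h0
      have h0' : x1 abk + εx * (if abk = j then 1 else 0) +
          δx * (if a ≤ abk.val ∧ abk.val < a + k then 1 else 0) = 0 := h0
      rw [if_pos (show a ≤ abk.val ∧ abk.val < a + k by omega), mul_one] at h0'
      have hδ : δx = x1 abk + εx * (if abk = j then 1 else 0) := zcancel _ _ h0'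
      rw [hE, hδ, hε, hx₀, hδdef]
    rcases hx' with hy | hy <;> rcases htv with ht | ht
    · have hE : x' = Ffam k a j x1 0 0 := by
        rw [cand00, hx1, ← ht, ← hy]
      exact Subtype.ext (show ((a : ℕ), x') = (a, x₀) by rw [pin _ _ hE])
    · have hE : x' = Ffam k a j x1 0 1 := by
        rw [hx1, ← cand_u_hi hi₀ j u, ← ht, ← hy]
      exact Subtype.ext (show ((a : ℕ), x') = (a, x₀) by rw [pin _ _ hE])
    · have hE : x' = Ffam k a j x1 1 0 := by
        rw [hx1, ← cand_w_lo i₀ hwu, ← ht, ← hy]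
      exact Subtype.ext (show ((a : ℕ), x') = (a, x₀) by rw [pin _ _ hE])
    · have hE : x' = Ffam k a j x1 1 1 := by
        rw [hx1, ← cand_w_hi hi₀ hwu, ← ht, ← hy]
      exact Subtype.ext (show ((a : ℕ), x') = (a, x₀) by rw [pin _ _ hE])
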